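/- Let A be a central hyperplane arrangement in K^l, X a flat of A with I(X) its defining prime ideal, and Y a flat of A with X ⊆ Y. Then I(Y) is an associated prime ideal of S/J(A) if and only if I(Y) is an associated prime ideal of S/J(A_X). -/

import Mathlib

open MvPolynomial

/-- The polynomial ring `S = K[x_1,...,x_l]`. -/
abbrev PolyS (K : Type*) [CommSemiring K] (l : ℕ) := MvPolynomial (Fin l) K

/-- A central hyperplane arrangement in `K^l`, given by its finite set of
(nonzero, homogeneous of degree 1) defining linear forms. -/
structure Arrangement (K : Type*) [Field K] (l : ℕ) where
  forms : Finset (PolyS K l)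
  homog : ∀ f ∈ forms, MvPolynomial.IsHomogeneous f 1
  nonzero : ∀ f ∈ forms, f ≠ 0

namespace Arrangement

variable {K : Type*} [Field K] {l : ℕ}

/-- The defining polynomial `Q(A)`. -/
noncomputable def Q (A : Arrangement K l) : PolyS K l := ∏ f ∈ A.forms, f

/-- The Jacobian ideal `J(A)`, generated by `Q(A)` and its partial derivatives. -/
noncomputable def jac (A : Arrangement K l) : Ideal (PolyS K l) :=
  Ideal.span ({A.Q} ∪ Set.range fun i : Fin l => pderiv i A.Q)

/-- The hyperplane (zero set) of a linear form. -/
def zeroSet (f : PolyS K l) : Set (Fin l → K) := {v | eval v f = 0}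

/-- `X` is a flat (element of the intersection lattice `L(A)`). -/
def IsFlat (A : Arrangement K l) (X : Set (Fin l → K)) : Prop :=
  ∃ B : Finset (PolyS K l), B ⊆ A.forms ∧ X = ⋂ f ∈ B, zeroSet f

/-- The localization `A_X` of `A` at a flat `X`: hyperplanes containing `X`. -/
noncomputable def locArr (A : Arrangement K l) (X : Set (Fin l → K)) : Arrangement K l :=
  letI : DecidablePred fun f : PolyS K l => X ⊆ zeroSet f := fun _ => Classical.propDecidable _
  { forms := A.forms.filter fun f => X ⊆ zeroSet f
    homog := fun f hf => A.homog f (Finset.mem_filter.mp hf).1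
    nonzero := fun f hf => A.nonzero f (Finset.mem_filter.mp hf).1 }

/-- The ideal `I(X)` generated by the linear forms of hyperplanes containing `X`. -/
noncomputable def flatIdeal (A : Arrangement K l) (X : Set (Fin l → K)) : Ideal (PolyS K l) :=
  Ideal.span {f | f ∈ A.forms ∧ X ⊆ zeroSet f}

/-- The coefficient (normal) vector of a linear form. -/
noncomputable def coeffVec (f : PolyS K l) : Fin l → K :=
  fun i => MvPolynomial.coeff (Finsupp.single i 1) f

/-- The rank (codimension) of a flat `X`, as the dimension of the span of the
normal vectors of the hyperplanes containing `X`. -/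
noncomputable def flatRank (A : Arrangement K l) (X : Set (Fin l → K)) : ℕ :=
  Module.finrank K (Submodule.span K (coeffVec '' {f | f ∈ A.forms ∧ X ⊆ zeroSet f}))

/-- The module `D(A)` of logarithmic derivations, viewed as the submodule of
`S^l` of coefficient vectors `δ` with `δ(Q(A)) ∈ ⟨Q(A)⟩`. -/
noncomputable def derMod (A : Arrangement K l) : Submodule (PolyS K l) (Fin l → PolyS K l) where
  carrier := {δ | (∑ i, δ i * pderiv i A.Q) ∈ Ideal.span {A.Q}}
  add_mem' := by
    intro a b ha hb
    simp only [Set.mem_setOf_eq, Pi.add_apply, add_mul, Finset.sum_add_distrib] at *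
    exact Ideal.add_mem _ ha hb
  zero_mem' := by simp
  smul_mem' := by
    intro c a ha
    simp only [Set.mem_setOf_eq, Pi.smul_apply, smul_eq_mul, mul_assoc, ← Finset.mul_sum] at *
    exact Ideal.mul_mem_left _ _ ha

/-- The submodule `D_0(A) = {δ : δ(Q(A)) = 0}`. -/
noncomputable def derMod0 (A : Arrangement K l) : Submodule (PolyS K l) (Fin l → PolyS K l) :=
  LinearMap.ker
    ((Fintype.linearCombination (PolyS K l)) fun i : Fin l => pderiv i A.Q)

/-- `A` is a free arrangement: `D(A)` is a free `S`-module. -/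
def IsFreeArr (A : Arrangement K l) : Prop := Module.Free (PolyS K l) A.derMod

end Arrangement

/-- The graded maximal ideal `(x_1,...,x_l)` of `S`. -/
noncomputable def mIdeal (K : Type*) [Field K] (l : ℕ) : Ideal (PolyS K l) :=
  Ideal.span (Set.range (MvPolynomial.X : Fin l → PolyS K l))

/-- A finite minimal free resolution of an `R`-module `M`, with minimality meaning
that all entries of the differentials lie in the ideal `m`; `b n` is the `n`-th
(total) Betti number, i.e. the rank of the `n`-th free module. -/
structure MinFreeRes (R : Type*) [CommRing R] (m : Ideal R)
    (M : Type*) [AddCommGroup M] [Module R M] (b : ℕ → ℕ) where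
  len : ℕ
  aug : (Fin (b 0) → R) →ₗ[R] M
  d : (n : ℕ) → ((Fin (b (n + 1)) → R) →ₗ[R] (Fin (b n) → R))
  aug_surj : Function.Surjective aug
  exact_aug : LinearMap.range (d 0) = LinearMap.ker aug
  exact : ∀ n, LinearMap.range (d (n + 1)) = LinearMap.ker (d n)
  minimal : ∀ n j i, d n (Pi.single j 1) i ∈ m
  finite : ∀ n, len < n → b n = 0

theorem ann_mk_mem_iff {S : Type*} [CommRing S] (J : Ideal S) (g f : S) :
    f ∈ (⊥ : Submodule S (S ⧸ J)).colon {Ideal.Quotient.mk J g} ↔ f * g ∈ J := by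
  rw [Submodule.mem_colon_singleton, Submodule.mem_bot]
  have : f • (Ideal.Quotient.mk J g) = Ideal.Quotient.mk J (f * g) := rfl
  rw [this, Ideal.Quotient.eq_zero_iff_mem]

theorem aux_transfer {S : Type*} [CommRing S] [IsNoetherianRing S] (J J' P : Ideal S) (r : S)
    (hle : J ≤ J') (hr2 : ∀ f ∈ J', r ^ 2 * f ∈ J) (hrP : P.IsPrime → r ∉ P) :
    IsAssociatedPrime P (S ⧸ J) ↔ IsAssociatedPrime P (S ⧸ J') := by
  rw [isAssociatedPrime_iff, isAssociatedPrime_iff]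
  constructor
  · rintro ⟨hP, x, hx⟩
    obtain ⟨g, rfl⟩ := Ideal.Quotient.mk_surjective x
    refine ⟨hP, Ideal.Quotient.mk J' g, ?_⟩
    ext f
    rw [ann_mk_mem_iff]
    constructor
    · intro hf
      have : f * g ∈ J := by rw [hx] at hf; rwa [ann_mk_mem_iff] at hf
      exact hle this
    · intro hf
      have h2 : r ^ 2 * (f * g) ∈ J := hr2 _ hf
      have : r ^ 2 * f ∈ P := by
        rw [hx, ann_mk_mem_iff, mul_assoc]; exact h2
      rcases hP.mem_or_mem this with h | h
      · exact absurd (hP.mem_of_pow_mem 2 h) (hrP hP)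
      · exact h
  · rintro ⟨hP, x, hx⟩
    obtain ⟨g, rfl⟩ := Ideal.Quotient.mk_surjective x
    refine ⟨hP, Ideal.Quotient.mk J (r ^ 2 * g), ?_⟩
    ext f
    rw [ann_mk_mem_iff]
    constructor
    · intro hf
      have : f * g ∈ J' := by rw [hx] at hf; rwa [ann_mk_mem_iff] at hf
      have := hr2 _ this
      rw [mul_left_comm]; exact this
    · intro hf
      have h1 : f * (r ^ 2 * g) ∈ J' := hle hf
      have h2 : r ^ 2 * (f * g) ∈ J' := by rw [mul_left_comm] at h1; exact h1
      have : r ^ 2 * f ∈ P := by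
        rw [hx, ann_mk_mem_iff]
        rw [mul_assoc]; exact h2
      rcases hP.mem_or_mem this with h | h
      · exact absurd (hP.mem_of_pow_mem 2 h) (hrP hP)
      · exact h


open Arrangement in
/-- For flats `X ⊆ Y` of a central arrangement `A`, the prime `I(Y)` is an associated
prime of `S/J(A)` if and only if it is an associated prime of `S/J(A_X)`. -/
theorem flatIdeal_mem_associatedPrimes_iff {K : Type*} [Field K] [CharZero K] {l : ℕ}
    (A : Arrangement K l) (X Y : Set (Fin l → K))
    (hX : A.IsFlat X) (hY : A.IsFlat Y) (hXY : X ⊆ Y) :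
    A.flatIdeal Y ∈ associatedPrimes (PolyS K l) (PolyS K l ⧸ A.jac) ↔
      A.flatIdeal Y ∈ associatedPrimes (PolyS K l) (PolyS K l ⧸ (A.locArr X).jac) := by
  classical
  set S := PolyS K l
  set P : Ideal S := A.flatIdeal Y with hPdef
  set Qx : S := (A.locArr X).Q with hQxdef
  set r : S := ∏ f ∈ A.forms.filter (fun f => ¬ X ⊆ zeroSet f), f with hrdef
  have hforms : (A.locArr X).forms = A.forms.filter (fun f => X ⊆ zeroSet f) := by
    simp only [locArr]
  have hfac : A.Q = Qx * r := by
    rw [hQxdef, hrdef]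
    show (∏ f ∈ A.forms, f) = (∏ f ∈ (A.locArr X).forms, f) * _
    rw [hforms, Finset.prod_filter_mul_prod_filter_not]
  -- generators of jac
  have hQmem : ∀ (B : Arrangement K l), B.Q ∈ B.jac := fun B =>
    Ideal.subset_span (Or.inl rfl)
  have hDmem : ∀ (B : Arrangement K l) (i : Fin l), pderiv i B.Q ∈ B.jac := fun B i =>
    Ideal.subset_span (Or.inr ⟨i, rfl⟩)
  have hle : A.jac ≤ (A.locArr X).jac := by
    rw [Arrangement.jac, Ideal.span_le]
    rintro g (rfl | ⟨i, rfl⟩)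
    · rw [hfac]
      exact Ideal.mul_mem_right _ _ (hQmem (A.locArr X))
    · show pderiv i A.Q ∈ _
      rw [hfac, pderiv_mul]
      exact Ideal.add_mem _ (Ideal.mul_mem_right _ _ (hDmem (A.locArr X) i))
        (Ideal.mul_mem_right _ _ (hQmem (A.locArr X)))
  have hr2 : ∀ f ∈ (A.locArr X).jac, r ^ 2 * f ∈ A.jac := by
    intro f hf
    rw [Arrangement.jac] at hf
    induction hf using Submodule.span_induction with
    | mem g hg =>
      rcases hg with rfl | ⟨i, rfl⟩
      · have : r ^ 2 * (A.locArr X).Q = r * A.Q := by rw [hfac]; ring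
        rw [this]
        exact Ideal.mul_mem_left _ _ (hQmem A)
      · have key : r ^ 2 * pderiv i (A.locArr X).Q =
            r * pderiv i A.Q - A.Q * pderiv i r := by
          rw [hfac, pderiv_mul]; ring
        rw [key]
        exact Ideal.sub_mem _ (Ideal.mul_mem_left _ _ (hDmem A i))
          (Ideal.mul_mem_right _ _ (hQmem A))
    | zero => simp
    | add g h _ _ hg hh =>
      rw [mul_add]; exact Ideal.add_mem _ hg hh
    | smul c g _ hg =>
      rw [smul_eq_mul, mul_left_comm]
      exact Ideal.mul_mem_left _ _ hg
  have hrP : P.IsPrime → r ∉ P := by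
    intro hP hr
    rw [hrdef, hP.prod_mem_iff_exists_mem] at hr
    obtain ⟨f, hf, hfP⟩ := hr
    rw [Finset.mem_filter] at hf
    apply hf.2
    intro v hv
    have hmem : P ≤ RingHom.ker (eval v : S →+* K) := by
      rw [hPdef, Arrangement.flatIdeal, Ideal.span_le]
      rintro g ⟨hg1, hg2⟩
      exact hg2 (hXY hv)
    exact hmem hfP
  exact aux_transfer _ _ _ r hle hr2 hrP
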